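/- Let 𝕊^d be the unit sphere in ℝ^{d+1} with geodesic distance ρ(x,y) = arccos⟨x,y⟩, and let δ > 1. Then for every Borel probability measure μ on 𝕊^d one has ∬_{𝕊^d} ρ(x,y)^δ dμ(x) dμ(y) ≤ π^δ / 2, and for every x ∈ 𝕊^d the measure μ = (δ_x + δ_{−x})/2 attains equality; i.e., the measures (δ_x + δ_{−x})/2 are maximizers of the geodesic energy ∬ ρ^δ dμ dμ over 𝒫(𝕊^d). -/

import Mathlib

open MeasureTheory Topology Filter Real
open scoped ENNReal RealInnerProductSpace

noncomputable def ab (n : ℕ) : ℝ := Nat.centralBinom n / 4 ^ n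

lemma ab_pos (n : ℕ) : 0 < ab n :=
  div_pos (by exact_mod_cast Nat.centralBinom_pos n) (by positivity)

lemma ab_le_one (n : ℕ) : ab n ≤ 1 := by
  rw [ab, div_le_one (by positivity)]
  have h1 : Nat.centralBinom n ≤ (2 * n + 1).choose n :=
    Nat.choose_le_choose n (by omega)
  have h2 := Nat.choose_middle_le_pow n
  exact_mod_cast h1.trans h2

lemma ab_zero : ab 0 = 1 := by simp [ab, Nat.centralBinom]

lemma ab_rec (n : ℕ) : 2 * ((n + 1 : ℝ) * ab (n + 1)) = (2 * n + 1) * ab n := by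
  have h := Nat.succ_mul_centralBinom_succ n
  have h' : ((n + 1 : ℕ) : ℝ) * (Nat.centralBinom (n + 1) : ℝ)
      = 2 * (2 * n + 1) * Nat.centralBinom n := by exact_mod_cast congrArg (Nat.cast (R := ℝ)) h
  rw [ab, ab]
  have h4 : (4 : ℝ) ^ (n + 1) = 4 * 4 ^ n := by ring
  push_cast at h'
  rw [h4]
  field_simp
  nlinarith [h', pow_pos (show (0:ℝ) < 4 by norm_num) n]

lemma abs_ab_le (n : ℕ) : |ab n| ≤ 1 := by
  rw [abs_of_pos (ab_pos n)]; exact ab_le_one n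

lemma summable_bound_mul {b : ℕ → ℝ} (hb : ∀ n, |b n| ≤ 1) {x : ℝ} (hx : |x| < 1) :
    Summable fun n => b n * x ^ n := by
  apply Summable.of_norm_bounded (summable_geometric_of_lt_one (abs_nonneg x) hx)
  intro n
  rw [norm_mul, norm_pow]
  calc ‖b n‖ * ‖x‖ ^ n ≤ 1 * |x| ^ n :=
        mul_le_mul_of_nonneg_right (hb n) (by positivity)
    _ = |x| ^ n := one_mul _

noncomputable def fb (x : ℝ) : ℝ := ∑' n, ab n * x ^ n

-- summability of derivative-type series with polynomial factor
lemma summable_n_mul {x : ℝ} (hx : |x| < 1) (c : ℕ → ℝ) (hc : ∀ n, |c n| ≤ 1) :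
    Summable fun n => c n * ((n : ℝ) * x ^ (n - 1)) := by
  rcases eq_or_ne x 0 with rfl | hx0
  · apply summable_of_ne_finset_zero (s := {0, 1})
    intro n hn
    simp only [Finset.mem_insert, Finset.mem_singleton] at hn
    push_neg at hn
    rw [zero_pow (by omega)]
    ring
  · have hS : Summable fun n : ℕ => (n : ℝ) * |x| ^ n := by
      have := summable_pow_mul_geometric_of_norm_lt_one 1 (show ‖|x|‖ < 1 by rwa [Real.norm_eq_abs, abs_abs])
      simpa using this
    apply Summable.of_norm_bounded (hS.mul_left |x|⁻¹)
    intro n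
    rcases Nat.eq_zero_or_pos n with rfl | hn
    · simp
    · have hxp : (0:ℝ) < |x| := abs_pos.mpr hx0
      rw [norm_mul, norm_mul, norm_pow]
      have h1 : ‖c n‖ ≤ 1 := hc n
      have h2 : ‖x‖ ^ (n - 1) = |x|⁻¹ * |x| ^ n := by
        rw [Real.norm_eq_abs, eq_comm, inv_mul_eq_iff_eq_mul₀ (ne_of_gt hxp), ← pow_succ']
        congr 1
        omega
      calc ‖c n‖ * (‖(n:ℝ)‖ * ‖x‖ ^ (n-1)) ≤ 1 * (‖(n:ℝ)‖ * ‖x‖ ^ (n-1)) := by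
            apply mul_le_mul_of_nonneg_right h1 (by positivity)
        _ = |x|⁻¹ * ((n:ℝ) * |x| ^ n) := by
            rw [one_mul, h2, Real.norm_natCast]; ring

lemma hasDerivAt_fb {x : ℝ} (hx : |x| < 1) :
    HasDerivAt fb (∑' n, ab n * ((n : ℝ) * x ^ (n - 1))) x := by
  set r : ℝ := (|x| + 1) / 2 with hr
  have hr0 : 0 < r := by positivity
  have hxr : |x| < r := by rw [hr]; linarith
  have hr1 : r < 1 := by rw [hr]; linarith
  apply hasDerivAt_tsum_of_isPreconnected
    (u := fun n : ℕ => (n : ℝ) * r ^ (n - 1))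
    (g := fun n x => ab n * x ^ n)
    (g' := fun (n : ℕ) (y : ℝ) => ab n * ((n : ℝ) * y ^ (n - 1)))
    (t := Metric.ball (0:ℝ) r) ?_ Metric.isOpen_ball
    (convex_ball (0:ℝ) r).isPreconnected
    (fun n y _ => (hasDerivAt_pow n y).const_mul (ab n))
    ?_ (Metric.mem_ball_self hr0) (by
      apply summable_bound_mul abs_ab_le
      simpa using hr0) (by rw [Metric.mem_ball, dist_zero_right, Real.norm_eq_abs]; exact hxr)
  · have := summable_n_mul (x := r) (by rwa [abs_of_pos hr0]) (fun _ => 1) (by norm_num)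
    simpa using this
  · intro n y hy
    have hyr : |y| ≤ r := by
      have := mem_ball_zero_iff.mp hy
      rw [Real.norm_eq_abs] at this
      exact this.le
    rw [norm_mul, norm_mul, norm_pow]
    calc ‖ab n‖ * (‖(n:ℝ)‖ * ‖y‖ ^ (n-1)) ≤ 1 * (‖(n:ℝ)‖ * ‖y‖ ^ (n-1)) :=
          mul_le_mul_of_nonneg_right (abs_ab_le n) (by positivity)
      _ ≤ (n : ℝ) * r ^ (n - 1) := by
          rw [one_mul, Real.norm_natCast]
          apply mul_le_mul_of_nonneg_left _ (Nat.cast_nonneg n)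
          exact pow_le_pow_left₀ (norm_nonneg y) hyr _

lemma ode_fb {x : ℝ} (hx : |x| < 1) :
    2 * (1 - x) * (∑' n, ab n * ((n : ℝ) * x ^ (n - 1))) = fb x := by
  set T : ℕ → ℝ := fun n => ab n * ((n : ℝ) * x ^ (n - 1)) with hT
  set D := ∑' n, T n with hD
  have hsum : Summable T := summable_n_mul hx ab abs_ab_le
  have hDsum : HasSum T D := hsum.hasSum
  have h2T : HasSum (fun n => 2 * T n) (2 * D) := hDsum.mul_left 2
  have hshift : HasSum (fun n => 2 * T (n + 1)) (2 * D) := by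
    have := (hasSum_nat_add_iff' (f := fun n => 2 * T n) 1).mpr h2T
    simpa [hT] using this
  have heqA : (fun n => 2 * T (n + 1)) = fun n : ℕ => (2 * n + 1) * ab n * x ^ n := by
    funext n
    have h := ab_rec n
    simp only [hT, Nat.add_sub_cancel, Nat.cast_add, Nat.cast_one]
    linear_combination x ^ n * h
  rw [heqA] at hshift
  have heqB : (fun n : ℕ => 2 * x * T n) = fun n : ℕ => (2 * n) * ab n * x ^ n := by
    funext n
    rcases Nat.eq_zero_or_pos n with rfl | hn
    · simp [hT]
    · have hxx : x ^ n = x * x ^ (n - 1) := by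
        rcases Nat.exists_eq_succ_of_ne_zero (by omega : n ≠ 0) with ⟨m, rfl⟩
        rw [Nat.succ_sub_one, pow_succ']
      simp only [hT]; rw [hxx]; ring
  have hB : HasSum (fun n : ℕ => (2 * n) * ab n * x ^ n) (2 * x * D) := by
    rw [← heqB]; exact hDsum.mul_left (2 * x)
  have hsub := hshift.sub hB
  have heqC : (fun n : ℕ => (2 * n + 1) * ab n * x ^ n - (2 * n) * ab n * x ^ n)
      = fun n : ℕ => ab n * x ^ n := by funext n; ring
  rw [heqC] at hsub
  have : fb x = 2 * D - 2 * x * D := hsub.tsum_eq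
  rw [this]; ring

lemma fb_sq {x : ℝ} (hx0 : 0 ≤ x) (hx : x < 1) : fb x ^ 2 * (1 - x) = 1 := by
  set F : ℝ → ℝ := fun y => fb y ^ 2 * (1 - y) with hF
  have key : ∀ y ∈ Set.Icc (0:ℝ) x, F y = F 0 := by
    have habs : ∀ y ∈ Set.Icc (0:ℝ) x, |y| < 1 := fun y hy => by
      rw [abs_of_nonneg hy.1]; exact lt_of_le_of_lt hy.2 hx
    intro y hy
    have hderiv : ∀ z ∈ Set.Ico (0:ℝ) x, HasDerivWithinAt F 0 (Set.Ici z) z := by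
      intro z hz
      have hz1 : |z| < 1 := habs z ⟨hz.1, hz.2.le⟩
      have hf := hasDerivAt_fb hz1
      have hFd : HasDerivAt F
          ((2 * fb z * (∑' n, ab n * ((n:ℝ) * z ^ (n-1)))) * (1 - z) + fb z ^ 2 * (-1)) z := by
        have h := ((hf.pow 2).mul ((hasDerivAt_id z).const_sub 1))
        refine h.congr_deriv ?_
        simp
      have hzero : (2 * fb z * (∑' n, ab n * ((n:ℝ) * z ^ (n-1)))) * (1 - z) + fb z ^ 2 * (-1) = 0 := by
        have := ode_fb hz1
        linear_combination fb z * this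
      rw [hzero] at hFd
      exact hFd.hasDerivWithinAt
    have hcont : ContinuousOn F (Set.Icc 0 x) := by
      intro y hy
      have : HasDerivAt fb _ y := hasDerivAt_fb (habs y hy)
      exact (((this.continuousAt.pow 2).mul (continuous_const.sub continuous_id).continuousAt)).continuousWithinAt
    exact constant_of_has_deriv_right_zero hcont hderiv y hy
  have h0 : F 0 = 1 := by
    have : fb 0 = 1 := by
      rw [fb, tsum_eq_single 0 (fun n hn => by rw [zero_pow hn]; ring)]
      simpa using ab_zero
    simp [hF, this]
  have := key x ⟨hx0, le_refl x⟩
  rw [h0] at this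
  exact this

lemma fb_pos {x : ℝ} (hx0 : 0 ≤ x) (hx : x < 1) : 0 < fb x := by
  have h1 : (1:ℝ) ≤ fb x := by
    have hs : Summable fun n => ab n * x ^ n :=
      summable_bound_mul abs_ab_le (by rwa [abs_of_nonneg hx0])
    have := Summable.le_tsum hs 0 (fun n _ => mul_nonneg (ab_pos n).le (pow_nonneg hx0 n))
    rw [fb]; simpa [ab_zero] using this
  linarith

lemma fb_eq {x : ℝ} (hx0 : 0 ≤ x) (hx : x < 1) : fb x = (Real.sqrt (1 - x))⁻¹ := by
  have hsq := fb_sq hx0 hx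
  have h1x : 0 < 1 - x := by linarith
  have h2 : fb x ^ 2 = (1 - x)⁻¹ := by
    rw [inv_eq_one_div, eq_div_iff h1x.ne']
    linarith [hsq]
  calc fb x = Real.sqrt (fb x ^ 2) := (Real.sqrt_sq (fb_pos hx0 hx).le).symm
    _ = Real.sqrt ((1-x)⁻¹) := by rw [h2]
    _ = (Real.sqrt (1-x))⁻¹ := by rw [Real.sqrt_inv]

noncomputable def gb (s : ℝ) : ℝ := ∑' n, (ab n / (2 * n + 1)) * s ^ (2 * n + 1)

lemma cb_abs_le (n : ℕ) : |ab n / (2 * (n:ℝ) + 1)| ≤ 1 := by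
  rw [abs_div]
  have h1 : (0:ℝ) < 2 * n + 1 := by positivity
  rw [div_le_one (by rwa [abs_of_pos h1])]
  calc |ab n| ≤ 1 := abs_ab_le n
    _ ≤ |2 * (n:ℝ) + 1| := by rw [abs_of_pos h1]; linarith [Nat.cast_nonneg (α := ℝ) n]

lemma hasDerivAt_gb {s : ℝ} (hs : |s| < 1) : HasDerivAt gb (fb (s ^ 2)) s := by
  set r : ℝ := (|s| + 1) / 2 with hr
  have hr0 : 0 < r := by positivity
  have hsr : |s| < r := by rw [hr]; linarith
  have hr1 : r < 1 := by rw [hr]; linarith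
  have key : HasDerivAt gb (∑' n, ab n * s ^ (2 * n)) s := by
    apply hasDerivAt_tsum_of_isPreconnected
      (u := fun n : ℕ => r ^ (2 * n))
      (g := fun (n : ℕ) (z : ℝ) => (ab n / (2 * n + 1)) * z ^ (2 * n + 1))
      (g' := fun (n : ℕ) (y : ℝ) => ab n * y ^ (2 * n))
      (t := Metric.ball (0:ℝ) r) ?_ Metric.isOpen_ball
      (convex_ball (0:ℝ) r).isPreconnected ?_ ?_ (Metric.mem_ball_self hr0) ?_
      (by rw [Metric.mem_ball, dist_zero_right, Real.norm_eq_abs]; exact hsr)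
    · have : Summable fun n : ℕ => (r ^ 2) ^ n := by
        apply summable_geometric_of_lt_one (by positivity)
        nlinarith
      exact this.congr fun n => by rw [← pow_mul]
    · intro n y _
      have h := (hasDerivAt_pow (2 * n + 1) y).const_mul (ab n / (2 * n + 1))
      refine h.congr_deriv ?_
      have h1 : (0:ℝ) < 2 * (n:ℝ) + 1 := by positivity
      rw [Nat.add_sub_cancel]
      push_cast
      field_simp
    · intro n y hy
      have hyr : |y| ≤ r := by
        have := Metric.mem_ball.mp hy
        rw [dist_zero_right, Real.norm_eq_abs] at this
        exact this.le
      rw [norm_mul, norm_pow]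
      calc ‖ab n‖ * ‖y‖ ^ (2*n) ≤ 1 * r ^ (2*n) := by
            apply mul_le_mul (abs_ab_le n) _ (by positivity) zero_le_one
            exact pow_le_pow_left₀ (norm_nonneg y) hyr _
        _ = r ^ (2*n) := one_mul _
    · apply summable_of_ne_finset_zero (s := ∅)
      intro n _
      simp
  have heq : (∑' n, ab n * s ^ (2 * n)) = fb (s ^ 2) := by
    rw [fb]
    exact tsum_congr fun n => by rw [pow_mul]
  rwa [heq] at key

lemma gb_zero : gb 0 = 0 := by
  rw [gb]
  convert tsum_zero with n
  rw [zero_pow (by omega)]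
  ring

lemma arcsin_eq_gb {s : ℝ} (hs : |s| < 1) : Real.arcsin s = gb s := by
  have habs : ∀ y : ℝ, |y| < 1 → HasDerivAt (fun z => gb z - Real.arcsin z) 0 y := by
    intro y hy
    have hy1 : y ≠ -1 := by intro h; rw [h] at hy; simp at hy
    have hy2 : y ≠ 1 := by intro h; rw [h] at hy; simp at hy
    have h1 := hasDerivAt_gb hy
    have h2 := Real.hasDerivAt_arcsin hy1 hy2
    have h3 := h1.sub h2
    refine h3.congr_deriv ?_
    have hsq : y ^ 2 < 1 := by
      have := abs_lt.mp hy
      nlinarith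
    rw [fb_eq (sq_nonneg y) hsq, one_div]
    ring
  have key : ∀ s : ℝ, |s| < 1 → gb s - Real.arcsin s = gb 0 - Real.arcsin 0 := by
    intro s hs
    rcases le_or_gt 0 s with h0 | h0
    · have := constant_of_has_deriv_right_zero (f := fun z => gb z - Real.arcsin z)
        (a := 0) (b := s) ?_ ?_ s ⟨h0, le_refl s⟩
      · exact this
      · intro y hy
        refine ((habs y ?_).continuousAt).continuousWithinAt
        rw [abs_of_nonneg hy.1]
        calc y ≤ s := hy.2
          _ ≤ |s| := le_abs_self s
          _ < 1 := hs
      · intro y hy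
        refine (habs y ?_).hasDerivWithinAt
        rw [abs_of_nonneg hy.1]
        calc y < s := hy.2
          _ ≤ |s| := le_abs_self s
          _ < 1 := hs
    · have := constant_of_has_deriv_right_zero (f := fun z => gb z - Real.arcsin z)
        (a := s) (b := 0) ?_ ?_ 0 ⟨h0.le, le_refl 0⟩
      · exact this.symm
      · intro y hy
        apply ((habs y ?_).continuousAt).continuousWithinAt
        rw [abs_lt] at hs ⊢
        rcases hy with ⟨hy1, hy2⟩
        constructor <;> linarith [hs.1, hs.2]
      · intro y hy
        apply (habs y ?_).hasDerivWithinAt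
        rw [abs_lt] at hs ⊢
        rcases hy with ⟨hy1, hy2⟩
        constructor <;> linarith [hs.1, hs.2]
  have h := key s hs
  rw [gb_zero, Real.arcsin_zero] at h
  have : gb s - Real.arcsin s = 0 := by rw [h]; ring
  linarith

abbrev Sph (d : ℕ) := ↥(Metric.sphere (0 : EuclideanSpace ℝ (Fin (d + 1))) 1)

lemma cont_integrable {X : Type*} [TopologicalSpace X] [CompactSpace X] [T2Space X]
    [MeasurableSpace X] [OpensMeasurableSpace X] {μ : Measure X} [IsFiniteMeasure μ]
    {f : X → ℝ} (hf : Continuous f) : Integrable f μ := by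
  rw [← integrableOn_univ]
  exact hf.continuousOn.integrableOn_compact isCompact_univ

lemma moment_nonneg {d : ℕ}
    (μ : Measure ↥(Metric.sphere (0 : EuclideanSpace ℝ (Fin (d + 1))) 1))
    [IsProbabilityMeasure μ] (n : ℕ) :
    0 ≤ ∫ p : ↥(Metric.sphere (0 : EuclideanSpace ℝ (Fin (d + 1))) 1) ×
          ↥(Metric.sphere (0 : EuclideanSpace ℝ (Fin (d + 1))) 1),
        (⟪(p.1 : EuclideanSpace ℝ (Fin (d + 1))), (p.2 : EuclideanSpace ℝ (Fin (d + 1)))⟫) ^ n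
        ∂(μ.prod μ) := by
  have hrw : ∀ p : ↥(Metric.sphere (0 : EuclideanSpace ℝ (Fin (d + 1))) 1) ×
          ↥(Metric.sphere (0 : EuclideanSpace ℝ (Fin (d + 1))) 1),
      (⟪(p.1 : EuclideanSpace ℝ (Fin (d + 1))), (p.2 : EuclideanSpace ℝ (Fin (d + 1)))⟫) ^ n
      = ∑ f : Fin n → Fin (d + 1),
          (∏ k, (p.1 : EuclideanSpace ℝ (Fin (d + 1))) (f k))
          * (∏ k, (p.2 : EuclideanSpace ℝ (Fin (d + 1))) (f k)) := by
    intro p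
    have : (⟪(p.1 : EuclideanSpace ℝ (Fin (d + 1))), (p.2 : EuclideanSpace ℝ (Fin (d + 1)))⟫ : ℝ)
        = ∑ i, (p.1 : EuclideanSpace ℝ (Fin (d + 1))) i * (p.2 : EuclideanSpace ℝ (Fin (d + 1))) i := by
      simp [PiLp.inner_apply, RCLike.inner_apply, mul_comm]
    rw [this, Finset.sum_pow']
    rw [Fintype.piFinset_univ]
    exact Finset.sum_congr rfl fun f _ => by rw [← Finset.prod_mul_distrib]
  simp_rw [hrw]
  rw [integral_finset_sum]
  · apply Finset.sum_nonneg
    intro f _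
    have := integral_prod_mul (μ := μ) (ν := μ)
      (f := fun a : ↥(Metric.sphere (0 : EuclideanSpace ℝ (Fin (d + 1))) 1) =>
        ∏ k, (a : EuclideanSpace ℝ (Fin (d + 1))) (f k))
      (g := fun a : ↥(Metric.sphere (0 : EuclideanSpace ℝ (Fin (d + 1))) 1) =>
        ∏ k, (a : EuclideanSpace ℝ (Fin (d + 1))) (f k))
    rw [this]
    exact mul_self_nonneg _
  · intro f _
    apply cont_integrable
    apply Continuous.mul <;>
    · apply continuous_finset_prod
      intro k _
      fun_prop

lemma inner_abs_le {d : ℕ} (p : Sph d × Sph d) :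
    |(⟪(p.1 : EuclideanSpace ℝ (Fin (d + 1))), (p.2 : EuclideanSpace ℝ (Fin (d + 1)))⟫ : ℝ)| ≤ 1 := by
  have h := abs_real_inner_le_norm (p.1 : EuclideanSpace ℝ (Fin (d + 1))) (p.2 : EuclideanSpace ℝ (Fin (d + 1)))
  simpa [mem_sphere_zero_iff_norm.mp p.1.2, mem_sphere_zero_iff_norm.mp p.2.2] using h

lemma cont_inner {d : ℕ} : Continuous fun p : Sph d × Sph d =>
    (⟪(p.1 : EuclideanSpace ℝ (Fin (d + 1))), (p.2 : EuclideanSpace ℝ (Fin (d + 1)))⟫ : ℝ) :=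
  Continuous.inner (continuous_subtype_val.comp continuous_fst)
    (continuous_subtype_val.comp continuous_snd)

lemma integral_arcsin_nonneg {d : ℕ} (μ : Measure (Sph d)) [IsProbabilityMeasure μ] :
    0 ≤ ∫ p : Sph d × Sph d,
        Real.arcsin (⟪(p.1 : EuclideanSpace ℝ (Fin (d + 1))), (p.2 : EuclideanSpace ℝ (Fin (d + 1)))⟫)
        ∂(μ.prod μ) := by
  set K : Sph d × Sph d → ℝ := fun p =>
    ⟪(p.1 : EuclideanSpace ℝ (Fin (d + 1))), (p.2 : EuclideanSpace ℝ (Fin (d + 1)))⟫ with hK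
  have hKabs : ∀ p, |K p| ≤ 1 := inner_abs_le
  have hKcont : Continuous K := cont_inner
  -- approximants
  have step : ∀ k : ℕ, 0 ≤ ∫ p, Real.arcsin ((1 - ((k:ℝ) + 2)⁻¹) * K p) ∂(μ.prod μ) := by
    intro k
    set c : ℝ := 1 - ((k:ℝ) + 2)⁻¹ with hc
    have hk2 : (0:ℝ) < (k:ℝ) + 2 := by positivity
    have hinv : ((k:ℝ) + 2)⁻¹ ≤ 2⁻¹ := by
      apply inv_anti₀ (by norm_num)
      linarith [Nat.cast_nonneg (α := ℝ) k]
    have hc0 : 0 ≤ c := by rw [hc]; linarith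
    have hc1 : c < 1 := by
      rw [hc]
      have : 0 < ((k:ℝ) + 2)⁻¹ := by positivity
      linarith
    have hpt : ∀ p, Real.arcsin (c * K p) =
        ∑' n, (ab n / (2 * n + 1)) * (c * K p) ^ (2 * n + 1) := by
      intro p
      rw [arcsin_eq_gb, gb]
      rw [abs_mul, abs_of_nonneg hc0]
      calc c * |K p| ≤ c * 1 := by
            apply mul_le_mul_of_nonneg_left (hKabs p) hc0
        _ < 1 := by rwa [mul_one]
    simp_rw [hpt]
    rw [integral_tsum ?meas ?fin]
    case meas =>
      intro n
      apply Continuous.aestronglyMeasurable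
      exact continuous_const.mul (((continuous_const.mul hKcont)).pow _)
    case fin =>
      have hbd : ∀ n : ℕ, ∫⁻ p, ‖(ab n / (2 * n + 1)) * (c * K p) ^ (2 * n + 1)‖₊ ∂(μ.prod μ)
          ≤ (‖c ^ (2 * n + 1)‖₊ : ℝ≥0∞) := by
        intro n
        have hb : ∀ p, (‖(ab n / (2 * n + 1)) * (c * K p) ^ (2 * n + 1)‖₊ : ℝ≥0∞)
            ≤ (‖c ^ (2 * n + 1)‖₊ : ℝ≥0∞) := by
          intro p
          rw [ENNReal.coe_le_coe, ← NNReal.coe_le_coe, coe_nnnorm, coe_nnnorm,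
            Real.norm_eq_abs, Real.norm_eq_abs]
          rw [abs_mul, abs_pow, abs_mul]
          have h1 : |c * K p| ≤ c := by
            rw [abs_mul, abs_of_nonneg hc0]
            calc c * |K p| ≤ c * 1 := mul_le_mul_of_nonneg_left (hKabs p) hc0
              _ = c := mul_one c
          calc |ab n / (2 * ↑n + 1)| * (|c| * |K p|) ^ (2*n+1)
              ≤ 1 * c ^ (2*n+1) := by
                apply mul_le_mul (cb_abs_le n) _ (by positivity) zero_le_one
                rw [← abs_mul]
                exact pow_le_pow_left₀ (abs_nonneg _) h1 _
            _ = c ^ (2*n+1) := one_mul _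
            _ ≤ |c ^ (2*n+1)| := le_abs_self _
        calc ∫⁻ p, ‖(ab n / (2 * n + 1)) * (c * K p) ^ (2 * n + 1)‖₊ ∂(μ.prod μ)
            ≤ ∫⁻ _, (‖c ^ (2 * n + 1)‖₊ : ℝ≥0∞) ∂(μ.prod μ) := lintegral_mono fun p => hb p
          _ = (‖c ^ (2 * n + 1)‖₊ : ℝ≥0∞) := by
              rw [lintegral_const, measure_univ, mul_one]
      apply ne_top_of_le_ne_top ?_ (ENNReal.tsum_le_tsum hbd)
      rw [ENNReal.tsum_coe_ne_top_iff_summable]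
      have : Summable fun n : ℕ => c ^ (2 * n + 1) := by
        apply Summable.of_nonneg_of_le (fun n => by positivity)
          (fun n => pow_le_pow_of_le_one hc0 hc1.le (show n ≤ 2*n+1 by omega))
        exact summable_geometric_of_lt_one hc0 hc1
      rw [← NNReal.summable_coe]
      apply this.congr
      intro n
      rw [coe_nnnorm, Real.norm_eq_abs, abs_of_nonneg (by positivity)]
    · apply tsum_nonneg
      intro n
      have hrw : (fun p => (ab n / (2 * n + 1)) * (c * K p) ^ (2 * n + 1))
          = fun p => ((ab n / (2 * n + 1)) * c ^ (2 * n + 1)) * (K p) ^ (2 * n + 1) := by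
        funext p
        rw [mul_pow]
        ring
      rw [hrw, integral_const_mul]
      apply mul_nonneg
      · apply mul_nonneg (div_nonneg (ab_pos n).le (by positivity)) (by positivity)
      · exact moment_nonneg μ (2 * n + 1)
  -- limit
  have htend : Tendsto (fun k : ℕ => ∫ p, Real.arcsin ((1 - ((k:ℝ) + 2)⁻¹) * K p) ∂(μ.prod μ))
      atTop (𝓝 (∫ p, Real.arcsin (K p) ∂(μ.prod μ))) := by
    apply tendsto_integral_of_dominated_convergence (fun _ => π / 2)
    · intro k
      exact (Real.continuous_arcsin.comp (continuous_const.mul hKcont)).aestronglyMeasurable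
    · exact integrable_const _
    · intro k
      filter_upwards with p
      rw [Real.norm_eq_abs, abs_le]
      exact ⟨Real.neg_pi_div_two_le_arcsin _, Real.arcsin_le_pi_div_two _⟩
    · filter_upwards with p
      have hc : Tendsto (fun k : ℕ => (1 - ((k:ℝ) + 2)⁻¹) * K p) atTop (𝓝 (K p)) := by
        have h1 : Tendsto (fun k : ℕ => ((k:ℝ) + 2)⁻¹) atTop (𝓝 0) := by
          apply Tendsto.inv_tendsto_atTop
          exact tendsto_atTop_add_const_right _ 2 tendsto_natCast_atTop_atTop
        have h2 : Tendsto (fun k : ℕ => (1 - ((k:ℝ) + 2)⁻¹)) atTop (𝓝 1) := by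
          have := (tendsto_const_nhds (x := (1:ℝ)) (f := atTop (α := ℕ))).sub h1
          simpa using this
        have := h2.mul_const (K p)
        rwa [one_mul] at this
      exact (Real.continuous_arcsin.tendsto (K p)).comp hc
  exact ge_of_tendsto htend (Eventually.of_forall step)

lemma rpow_bound {δ : ℝ} (hδ : 1 < δ) {a : ℝ} (ha : 0 ≤ a) (hπ : a ≤ π) :
    a ^ δ ≤ π ^ (δ - 1) * a := by
  rcases eq_or_lt_of_le ha with h0 | h0
  · rw [← h0, Real.zero_rpow (by linarith), mul_zero]
  · have : a ^ δ = a ^ (δ - 1) * a := by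
      rw [Real.rpow_sub_one h0.ne']
      field_simp
    rw [this]
    apply mul_le_mul_of_nonneg_right _ ha
    exact Real.rpow_le_rpow ha hπ (by linarith)

theorem part1 {d : ℕ} (δ : ℝ) (hδ : 1 < δ)
    (μ : Measure (Sph d)) (hμ : IsProbabilityMeasure μ) :
    ∫ x, ∫ y, (Real.arccos ⟪(x : EuclideanSpace ℝ (Fin (d + 1))),
        (y : EuclideanSpace ℝ (Fin (d + 1)))⟫) ^ δ ∂μ ∂μ ≤ π ^ δ / 2 := by
  haveI := hμ
  set K : Sph d × Sph d → ℝ := fun p =>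
    ⟪(p.1 : EuclideanSpace ℝ (Fin (d + 1))), (p.2 : EuclideanSpace ℝ (Fin (d + 1)))⟫ with hKdef
  have hKcont : Continuous K := cont_inner
  have hAcont : Continuous fun p => Real.arccos (K p) := Real.continuous_arccos.comp hKcont
  have hFcont : Continuous fun p => (Real.arccos (K p)) ^ δ :=
    hAcont.rpow_const fun _ => Or.inr (by linarith)
  have hfub : ∫ x, ∫ y, (Real.arccos ⟪(x : EuclideanSpace ℝ (Fin (d + 1))),
        (y : EuclideanSpace ℝ (Fin (d + 1)))⟫) ^ δ ∂μ ∂μ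
      = ∫ p : Sph d × Sph d, (Real.arccos (K p)) ^ δ ∂(μ.prod μ) := by
    exact integral_integral (cont_integrable hFcont)
  rw [hfub]
  have h1 : ∫ p : Sph d × Sph d, Real.arccos (K p) ∂(μ.prod μ) ≤ π / 2 := by
    have hrw : (fun p : Sph d × Sph d => Real.arccos (K p))
        = fun p => π / 2 - Real.arcsin (K p) :=
      funext fun p => Real.arccos_eq_pi_div_two_sub_arcsin (K p)
    rw [hrw, integral_sub (integrable_const _)
      (cont_integrable (show Continuous fun p : Sph d × Sph d => Real.arcsin (K p) from Real.continuous_arcsin.comp hKcont))]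
    have := integral_arcsin_nonneg μ
    simp only [integral_const, measure_univ, ENNReal.toReal_one, probReal_univ, smul_eq_mul, one_mul]
    linarith [this]
  have h2 : ∫ p : Sph d × Sph d, (Real.arccos (K p)) ^ δ ∂(μ.prod μ)
      ≤ π ^ (δ - 1) * ∫ p : Sph d × Sph d, Real.arccos (K p) ∂(μ.prod μ) := by
    rw [← integral_const_mul]
    apply integral_mono (cont_integrable hFcont)
      (cont_integrable (continuous_const.mul hAcont))
    intro p
    exact rpow_bound hδ (Real.arccos_nonneg _) (Real.arccos_le_pi _)
  have h3 : π ^ (δ - 1) * ∫ p : Sph d × Sph d, Real.arccos (K p) ∂(μ.prod μ)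
      ≤ π ^ (δ - 1) * (π / 2) :=
    mul_le_mul_of_nonneg_left h1 (Real.rpow_nonneg Real.pi_pos.le _)
  have h4 : π ^ (δ - 1) * (π / 2) = π ^ δ / 2 := by
    rw [Real.rpow_sub_one Real.pi_ne_zero]
    field_simp
  linarith

lemma integrable_dirac'' {α : Type*} [MeasurableSpace α] [MeasurableSingletonClass α]
    {f : α → ℝ} (hf : StronglyMeasurable f) (a : α) : Integrable f (Measure.dirac a) := by
  refine ⟨hf.aestronglyMeasurable, ?_⟩
  simp only [HasFiniteIntegral, lintegral_dirac]
  exact ENNReal.coe_lt_top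

lemma contArccos {d : ℕ} (δ : ℝ) (hδ : 1 < δ)
    (g h : ↥(Metric.sphere (0 : EuclideanSpace ℝ (Fin (d + 1))) 1) → EuclideanSpace ℝ (Fin (d+1)))
    (hg : Continuous g) (hh : Continuous h) :
    Continuous fun b => (Real.arccos ⟪g b, h b⟫) ^ δ := by
  apply Continuous.rpow_const
  · exact Real.continuous_arccos.comp (Continuous.inner hg hh)
  · intro _; right; linarith

lemma part2_dirac (d : ℕ) (δ : ℝ) (hδ : 1 < δ)
    (x : ↥(Metric.sphere (0 : EuclideanSpace ℝ (Fin (d + 1))) 1)) :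
      ∫ a, ∫ b, (Real.arccos ⟪(a : EuclideanSpace ℝ (Fin (d + 1))),
          (b : EuclideanSpace ℝ (Fin (d + 1)))⟫) ^ δ
        ∂((2 : ℝ≥0∞)⁻¹ • (Measure.dirac x + Measure.dirac (-x)))
        ∂((2 : ℝ≥0∞)⁻¹ • (Measure.dirac x + Measure.dirac (-x))) = π ^ δ / 2 := by
  have hx1 : ‖(x : EuclideanSpace ℝ (Fin (d + 1)))‖ = 1 :=
    mem_sphere_zero_iff_norm.mp x.2
  have hxx : ⟪(x : EuclideanSpace ℝ (Fin (d + 1))), (x : EuclideanSpace ℝ (Fin (d + 1)))⟫ = 1 := by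
    rw [real_inner_self_eq_norm_sq, hx1]; norm_num
  have hneg : (((-x) : ↥(Metric.sphere (0 : EuclideanSpace ℝ (Fin (d + 1))) 1)) : EuclideanSpace ℝ (Fin (d + 1))) = -(x : EuclideanSpace ℝ (Fin (d + 1))) := rfl
  have h0 : (0 : ℝ) ^ δ = 0 := Real.zero_rpow (by linarith)
  have key : ∀ (f : ↥(Metric.sphere (0 : EuclideanSpace ℝ (Fin (d + 1))) 1) → ℝ),
      StronglyMeasurable f →
      ∫ a, f a ∂((2 : ℝ≥0∞)⁻¹ • (Measure.dirac x + Measure.dirac (-x)))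
        = (f x + f (-x)) / 2 := by
    intro f hf
    rw [integral_smul_measure, integral_add_measure (integrable_dirac'' hf x)
      (integrable_dirac'' hf (-x)), integral_dirac, integral_dirac]
    simp [ENNReal.toReal_inv]
    ring
  have hinner : (fun a : ↥(Metric.sphere (0 : EuclideanSpace ℝ (Fin (d + 1))) 1) =>
      ∫ b, (Real.arccos ⟪(a : EuclideanSpace ℝ (Fin (d + 1))),
          (b : EuclideanSpace ℝ (Fin (d + 1)))⟫) ^ δ
        ∂((2 : ℝ≥0∞)⁻¹ • (Measure.dirac x + Measure.dirac (-x))))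
      = fun a : ↥(Metric.sphere (0 : EuclideanSpace ℝ (Fin (d + 1))) 1) =>
        ((Real.arccos ⟪(a : EuclideanSpace ℝ (Fin (d + 1))), (x : EuclideanSpace ℝ (Fin (d + 1)))⟫) ^ δ
        + (Real.arccos ⟪(a : EuclideanSpace ℝ (Fin (d + 1))), (((-x) : ↥(Metric.sphere (0 : EuclideanSpace ℝ (Fin (d + 1))) 1)) : EuclideanSpace ℝ (Fin (d + 1)))⟫) ^ δ) / 2 := by
    funext a
    exact key _ (contArccos δ hδ _ _ continuous_const continuous_subtype_val).stronglyMeasurable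
  rw [hinner, key]
  · rw [hneg]
    simp only [inner_neg_right, inner_neg_left, hxx, neg_neg]
    rw [Real.arccos_one, Real.arccos_neg_one, h0]
    have hπ : (0:ℝ) < π ^ δ := Real.rpow_pos_of_pos Real.pi_pos δ
    ring
  · exact ((contArccos δ hδ _ _ continuous_subtype_val continuous_const).add
      (contArccos δ hδ _ _ continuous_subtype_val continuous_const)).div_const 2 |>.stronglyMeasurable

/-- maximizers of the geodesic energy on the sphere, `δ > 1`.
For `δ > 1` and every Borel probability measure `μ` on `𝕊^d`,
`∬ ρ(x,y)^δ dμ dμ ≤ π^δ/2`, and for every `x ∈ 𝕊^d` the measure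
`(δ_x + δ_{−x})/2` attains equality. -/
theorem stmt_14 (d : ℕ) (δ : ℝ) (hδ : 1 < δ) :
    (∀ μ : Measure ↥(Metric.sphere (0 : EuclideanSpace ℝ (Fin (d + 1))) 1),
      IsProbabilityMeasure μ →
      ∫ x, ∫ y, (Real.arccos ⟪(x : EuclideanSpace ℝ (Fin (d + 1))),
          (y : EuclideanSpace ℝ (Fin (d + 1)))⟫) ^ δ ∂μ ∂μ ≤ π ^ δ / 2) ∧
    (∀ x : ↥(Metric.sphere (0 : EuclideanSpace ℝ (Fin (d + 1))) 1),
      ∫ a, ∫ b, (Real.arccos ⟪(a : EuclideanSpace ℝ (Fin (d + 1))),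
          (b : EuclideanSpace ℝ (Fin (d + 1)))⟫) ^ δ
        ∂((2 : ℝ≥0∞)⁻¹ • (Measure.dirac x + Measure.dirac (-x)))
        ∂((2 : ℝ≥0∞)⁻¹ • (Measure.dirac x + Measure.dirac (-x))) = π ^ δ / 2) := by
  exact ⟨fun μ hμ => part1 δ hδ μ hμ, fun x => part2_dirac d δ hδ x⟩
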